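/- For α ≥ 1, the weighted space l²_a(α) satisfies the composition inequality ‖φ ∘ f‖²_{l²_a(α)} ≤ φ(‖f‖²_{H²}) for every f ∈ H², where φ(z) = z^{2α−1} (with 2α−1 a positive integer). -/

import Mathlib

open Complex Metric ComplexConjugate

noncomputable section

/-- Predicate: `f` is holomorphic on the unit disc. -/
def HolOn (f : ℂ → ℂ) : Prop := AnalyticOn ℂ f (Metric.ball 0 1)

/-- `k`-th Taylor coefficient of `f` at the origin. -/
def coef (f : ℂ → ℂ) (k : ℕ) : ℂ := iteratedDeriv k f 0 / (Nat.factorial k)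

/-- Hardy space `H²` norm via Taylor coefficients. -/
def H2norm (f : ℂ → ℂ) : ℝ := Real.sqrt (∑' k : ℕ, ‖coef f k‖ ^ 2)

def MemH2 (f : ℂ → ℂ) : Prop := HolOn f ∧ Summable (fun k : ℕ => ‖coef f k‖ ^ 2)

def Hinfnorm (f : ℂ → ℂ) : ℝ := sSup ((fun z => ‖f z‖) '' Metric.ball (0:ℂ) 1)

def MemHinf (f : ℂ → ℂ) : Prop := HolOn f ∧ BddAbove ((fun z => ‖f z‖) '' Metric.ball (0:ℂ) 1)

/-- Elementary Blaschke factor. -/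
def blaschke (l z : ℂ) : ℂ := (l - z) / (1 - conj l * z)

def BlaschkeProd {n : ℕ} (l : Fin n → ℂ) (z : ℂ) : ℂ := ∏ i, blaschke (l i) z

/-- `g` agrees with `f` on the finite sequence `l` (with multiplicities). -/
def AgreeOn {n : ℕ} (l : Fin n → ℂ) (f g : ℂ → ℂ) : Prop :=
  ∃ h : ℂ → ℂ, HolOn h ∧ ∀ z ∈ Metric.ball (0:ℂ) 1, f z - g z = BlaschkeProd l z * h z

/-- Interpolation constant `c(σ, H², H^∞)`. -/
def cH2Hinf {n : ℕ} (l : Fin n → ℂ) : ℝ :=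
  sSup { c | ∃ f, MemH2 f ∧ H2norm f ≤ 1 ∧
    c = sInf { m | ∃ g, MemHinf g ∧ Hinfnorm g = m ∧ AgreeOn l f g } }

/-- `C_{n,r}(H², H^∞)`. -/
def CnrH2Hinf (n : ℕ) (r : ℝ) : ℝ :=
  sSup { c | ∃ m, m ≤ n ∧ ∃ l : Fin m → ℂ, (∀ i, ‖l i‖ ≤ r) ∧ c = cH2Hinf l }

/-- Cauchy sesquilinear pairing. -/
def cauchyPairing (f g : ℂ → ℂ) : ℂ := ∑' k : ℕ, coef f k * conj (coef g k)

/-- Membership in the model space `K_B = H² ⊖ B H²`. -/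
def MemKB {n : ℕ} (l : Fin n → ℂ) (g : ℂ → ℂ) : Prop :=
  MemH2 g ∧ ∀ h, MemH2 h → cauchyPairing g (fun z => BlaschkeProd l z * h z) = 0
/-- Weighted space `l²_a(α)` norm: `‖f‖² = Σ |f̂(k)|²/(k+1)^{2(α-1)}`. -/
def l2aNorm (α : ℝ) (f : ℂ → ℂ) : ℝ :=
  Real.sqrt (∑' k : ℕ, ‖coef f k‖ ^ 2 / ((k : ℝ) + 1) ^ (2 * (α - 1)))

def Meml2a (α : ℝ) (f : ℂ → ℂ) : Prop :=
  HolOn f ∧ Summable (fun k : ℕ => ‖coef f k‖ ^ 2 / ((k : ℝ) + 1) ^ (2 * (α - 1)))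

section AuxLemmas

open Finset in
lemma aux_coef_eq_coeff {f : ℂ → ℂ} {p : FormalMultilinearSeries ℂ ℂ ℂ}
    (h : HasFPowerSeriesAt f p 0) (k : ℕ) : coef f k = p.coeff k := by
  obtain ⟨r, hr⟩ := h
  have h1 := hr.factorial_smul (1 : ℂ) k
  rw [FormalMultilinearSeries.apply_eq_pow_smul_coeff, one_pow, one_smul] at h1
  have hk : ((Nat.factorial k : ℂ)) ≠ 0 := by
    exact_mod_cast k.factorial_ne_zero
  rw [coef, iteratedDeriv_eq_iteratedFDeriv, ← h1, nsmul_eq_mul, mul_div_cancel_left₀ _ hk]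

lemma aux_analyticAt0 {f : ℂ → ℂ} (hf : HolOn f) : AnalyticAt ℂ f 0 :=
  (Metric.isOpen_ball.analyticOn_iff_analyticOnNhd.mp hf) 0 (Metric.mem_ball_self one_pos)

lemma aux_ofScalars_coeff (c : ℕ → ℂ) (n : ℕ) :
    (FormalMultilinearSeries.ofScalars ℂ c).coeff n = c n := by
  have h := FormalMultilinearSeries.ofScalars_apply_eq (E := ℂ) (c := c) (1 : ℂ) n
  rw [FormalMultilinearSeries.coeff, Pi.one_def, h]
  simp

lemma aux_coef_mul {f g : ℂ → ℂ} (hf : AnalyticAt ℂ f 0) (hg : AnalyticAt ℂ g 0) (k : ℕ) :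
    coef (fun z => f z * g z) k =
      ∑ ij ∈ Finset.HasAntidiagonal.antidiagonal k, coef f ij.1 * coef g ij.2 := by
  obtain ⟨p, hp⟩ := hf
  obtain ⟨q, hq⟩ := hg
  obtain ⟨rp, hrp⟩ := hp
  obtain ⟨rq, hrq⟩ := hq
  obtain ⟨r, hr0, hrlt⟩ := ENNReal.lt_iff_exists_nnreal_btwn.mp (lt_min hrp.r_pos hrq.r_pos)
  have hrp' : (r : ENNReal) < rp := hrlt.trans_le (min_le_left _ _)
  have hrq' : (r : ENNReal) < rq := hrlt.trans_le (min_le_right _ _)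
  have hr0' : 0 < r := ENNReal.coe_pos.mp hr0
  -- summability of coefficient norm series
  have hsp : Summable (fun n => ‖p.coeff n‖ * (r : ℝ) ^ n) := by
    simpa [FormalMultilinearSeries.norm_apply_eq_norm_coef] using
      p.summable_norm_mul_pow (hrp'.trans_le hrp.r_le)
  have hsq : Summable (fun n => ‖q.coeff n‖ * (r : ℝ) ^ n) := by
    simpa [FormalMultilinearSeries.norm_apply_eq_norm_coef] using
      q.summable_norm_mul_pow (hrq'.trans_le hrq.r_le)
  have hsp' : Summable (fun n => ‖‖p.coeff n‖ * (r : ℝ) ^ n‖) :=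
    hsp.congr fun n => (Real.norm_of_nonneg (by positivity)).symm
  have hsq' : Summable (fun n => ‖‖q.coeff n‖ * (r : ℝ) ^ n‖) :=
    hsq.congr fun n => (Real.norm_of_nonneg (by positivity)).symm
  have hd : Summable (fun n => ∑ ij ∈ Finset.HasAntidiagonal.antidiagonal n,
      (‖p.coeff ij.1‖ * (r : ℝ) ^ ij.1) * (‖q.coeff ij.2‖ * (r : ℝ) ^ ij.2)) :=
    (summable_norm_sum_mul_antidiagonal_of_summable_norm hsp' hsq').of_norm
  have hsc : Summable (fun n =>
      ‖∑ ij ∈ Finset.HasAntidiagonal.antidiagonal n, p.coeff ij.1 * q.coeff ij.2‖ * (r : ℝ) ^ n) := by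
    refine Summable.of_nonneg_of_le (fun n => by positivity) (fun n => ?_) hd
    calc ‖∑ ij ∈ Finset.HasAntidiagonal.antidiagonal n, p.coeff ij.1 * q.coeff ij.2‖ * (r : ℝ) ^ n
        ≤ (∑ ij ∈ Finset.HasAntidiagonal.antidiagonal n, ‖p.coeff ij.1‖ * ‖q.coeff ij.2‖) * (r : ℝ) ^ n := by
          gcongr
          exact (norm_sum_le _ _).trans (le_of_eq (Finset.sum_congr rfl fun ij _ => norm_mul _ _))
      _ = ∑ ij ∈ Finset.HasAntidiagonal.antidiagonal n,
            (‖p.coeff ij.1‖ * (r : ℝ) ^ ij.1) * (‖q.coeff ij.2‖ * (r : ℝ) ^ ij.2) := by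
          rw [Finset.sum_mul]
          refine Finset.sum_congr rfl fun ij hij => ?_
          rw [Finset.HasAntidiagonal.mem_antidiagonal] at hij
          rw [← hij, pow_add]; ring
  -- the product power series
  have hrad : (r : ENNReal) ≤ (FormalMultilinearSeries.ofScalars ℂ
      (fun n => ∑ ij ∈ Finset.HasAntidiagonal.antidiagonal n, p.coeff ij.1 * q.coeff ij.2)).radius := by
    apply FormalMultilinearSeries.le_radius_of_summable
    refine hsc.congr fun n => ?_
    rw [FormalMultilinearSeries.norm_apply_eq_norm_coef, aux_ofScalars_coeff]
  have hPpos : 0 < (FormalMultilinearSeries.ofScalars ℂ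
      (fun n => ∑ ij ∈ Finset.HasAntidiagonal.antidiagonal n, p.coeff ij.1 * q.coeff ij.2)).radius :=
    lt_of_lt_of_le hr0 hrad
  have hPat : HasFPowerSeriesAt (FormalMultilinearSeries.ofScalars ℂ
      (fun n => ∑ ij ∈ Finset.HasAntidiagonal.antidiagonal n, p.coeff ij.1 * q.coeff ij.2)).sum
      (FormalMultilinearSeries.ofScalars ℂ
      (fun n => ∑ ij ∈ Finset.HasAntidiagonal.antidiagonal n, p.coeff ij.1 * q.coeff ij.2)) 0 :=
    (FormalMultilinearSeries.hasFPowerSeriesOnBall _ hPpos).hasFPowerSeriesAt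
  -- the two functions agree near 0
  have heq : (fun z => f z * g z) =ᶠ[nhds 0] (FormalMultilinearSeries.ofScalars ℂ
      (fun n => ∑ ij ∈ Finset.HasAntidiagonal.antidiagonal n, p.coeff ij.1 * q.coeff ij.2)).sum := by
    filter_upwards [EMetric.ball_mem_nhds (0 : ℂ) hr0] with z hz
    have hzp : z ∈ EMetric.ball (0 : ℂ) rp := EMetric.ball_subset_ball hrp'.le hz
    have hzq : z ∈ EMetric.ball (0 : ℂ) rq := EMetric.ball_subset_ball hrq'.le hz
    have hzr : ‖z‖ ≤ (r : ℝ) := by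
      have h1 := mem_emetric_ball_zero_iff.mp hz
      exact_mod_cast (ENNReal.coe_lt_coe.mp h1).le
    have hfz : HasSum (fun n => p.coeff n * z ^ n) (f z) := by
      have h0 := hrp.hasSum hzp
      rw [zero_add] at h0
      have he : (fun n => p n fun _ => z) = fun n => p.coeff n * z ^ n := by
        funext n
        rw [FormalMultilinearSeries.apply_eq_pow_smul_coeff, smul_eq_mul]; ring
      rwa [he] at h0
    have hgz : HasSum (fun n => q.coeff n * z ^ n) (g z) := by
      have h0 := hrq.hasSum hzq
      rw [zero_add] at h0
      have he : (fun n => q n fun _ => z) = fun n => q.coeff n * z ^ n := by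
        funext n
        rw [FormalMultilinearSeries.apply_eq_pow_smul_coeff, smul_eq_mul]; ring
      rwa [he] at h0
    have hxnorm : Summable (fun n => ‖p.coeff n * z ^ n‖) := by
      refine Summable.of_nonneg_of_le (fun n => norm_nonneg _) (fun n => ?_) hsp
      rw [norm_mul, norm_pow]
      exact mul_le_mul_of_nonneg_left (pow_le_pow_left₀ (norm_nonneg _) hzr n) (norm_nonneg _)
    have hynorm : Summable (fun n => ‖q.coeff n * z ^ n‖) := by
      refine Summable.of_nonneg_of_le (fun n => norm_nonneg _) (fun n => ?_) hsq
      rw [norm_mul, norm_pow]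
      exact mul_le_mul_of_nonneg_left (pow_le_pow_left₀ (norm_nonneg _) hzr n) (norm_nonneg _)
    calc f z * g z
        = ∑' n : ℕ, ∑ ij ∈ Finset.HasAntidiagonal.antidiagonal n,
            (p.coeff ij.1 * z ^ ij.1) * (q.coeff ij.2 * z ^ ij.2) := by
          rw [← hfz.tsum_eq, ← hgz.tsum_eq]
          exact tsum_mul_tsum_eq_tsum_sum_antidiagonal_of_summable_norm hxnorm hynorm
      _ = ∑' n : ℕ, (∑ ij ∈ Finset.HasAntidiagonal.antidiagonal n, p.coeff ij.1 * q.coeff ij.2) * z ^ n := by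
          refine tsum_congr fun n => ?_
          rw [Finset.sum_mul]
          refine Finset.sum_congr rfl fun ij hij => ?_
          rw [Finset.HasAntidiagonal.mem_antidiagonal] at hij
          rw [← hij, pow_add]; ring
      _ = (FormalMultilinearSeries.ofScalars ℂ
            (fun n => ∑ ij ∈ Finset.HasAntidiagonal.antidiagonal n, p.coeff ij.1 * q.coeff ij.2)).sum z := by
          rw [show (FormalMultilinearSeries.ofScalars ℂ
              (fun n => ∑ ij ∈ Finset.HasAntidiagonal.antidiagonal n, p.coeff ij.1 * q.coeff ij.2)).sum
            = FormalMultilinearSeries.ofScalarsSum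
              (fun n => ∑ ij ∈ Finset.HasAntidiagonal.antidiagonal n, p.coeff ij.1 * q.coeff ij.2) from rfl,
            FormalMultilinearSeries.ofScalars_sum_eq]
          refine tsum_congr fun n => ?_
          rw [smul_eq_mul]
  have hfinal : HasFPowerSeriesAt (fun z => f z * g z)
      (FormalMultilinearSeries.ofScalars ℂ
      (fun n => ∑ ij ∈ Finset.HasAntidiagonal.antidiagonal n, p.coeff ij.1 * q.coeff ij.2)) 0 :=
    hPat.congr heq.symm
  rw [aux_coef_eq_coeff hfinal k]
  have hPcoeff : (FormalMultilinearSeries.ofScalars ℂ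
      (fun n => ∑ ij ∈ Finset.HasAntidiagonal.antidiagonal n, p.coeff ij.1 * q.coeff ij.2)).coeff k
      = ∑ ij ∈ Finset.HasAntidiagonal.antidiagonal k, p.coeff ij.1 * q.coeff ij.2 := by
    exact aux_ofScalars_coeff _ k
  rw [hPcoeff]
  refine Finset.sum_congr rfl fun ij _ => ?_
  rw [aux_coef_eq_coeff ⟨rp, hrp⟩, aux_coef_eq_coeff ⟨rq, hrq⟩]

lemma aux_key {f : ℂ → ℂ} (hf : MemH2 f) :
    ∀ N : ℕ, 1 ≤ N →
      Summable (fun k : ℕ => ‖coef (fun z => f z ^ N) k‖ ^ 2 / ((k : ℝ) + 1) ^ (N - 1)) ∧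
      ∑' k : ℕ, ‖coef (fun z => f z ^ N) k‖ ^ 2 / ((k : ℝ) + 1) ^ (N - 1)
        ≤ (∑' k : ℕ, ‖coef f k‖ ^ 2) ^ N := by
  intro N
  induction N with
  | zero => intro h; exact absurd h (by norm_num)
  | succ N ih =>
    intro _
    simp only [Nat.add_sub_cancel]
    rcases Nat.eq_zero_or_pos N with hN0 | hN1
    · subst hN0
      simp only [zero_add, pow_one, pow_zero, div_one]
      exact ⟨hf.2, le_refl _⟩
    · obtain ⟨hSum, hLe⟩ := ih hN1
      have hfa : AnalyticAt ℂ f 0 := aux_analyticAt0 hf.1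
      have hcoef : ∀ k, coef (fun z => f z ^ (N + 1)) k
          = ∑ ij ∈ Finset.HasAntidiagonal.antidiagonal k, coef f ij.1 * coef (fun z => f z ^ N) ij.2 := by
        intro k
        have hfun : (fun z => f z ^ (N + 1)) = fun z => f z * f z ^ N := by
          funext z; rw [pow_succ]; ring
        rw [hfun]
        exact aux_coef_mul hfa (hfa.pow N) k
      -- summability of the majorant Cauchy product
      have hsa' : Summable (fun n : ℕ => ‖‖coef f n‖ ^ 2‖) :=
        hf.2.congr fun n => (Real.norm_of_nonneg (by positivity)).symm
      have hsu' : Summable (fun n : ℕ =>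
          ‖‖coef (fun z => f z ^ N) n‖ ^ 2 / ((n : ℝ) + 1) ^ (N - 1)‖) :=
        hSum.congr fun n => (Real.norm_of_nonneg (by positivity)).symm
      have hvs : Summable (fun n : ℕ => ∑ ij ∈ Finset.HasAntidiagonal.antidiagonal n,
          ‖coef f ij.1‖ ^ 2 *
            (‖coef (fun z => f z ^ N) ij.2‖ ^ 2 / ((ij.2 : ℝ) + 1) ^ (N - 1))) :=
        (summable_norm_sum_mul_antidiagonal_of_summable_norm hsa' hsu').of_norm
      have htsum_v : ∑' n : ℕ, (∑ ij ∈ Finset.HasAntidiagonal.antidiagonal n,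
          ‖coef f ij.1‖ ^ 2 *
            (‖coef (fun z => f z ^ N) ij.2‖ ^ 2 / ((ij.2 : ℝ) + 1) ^ (N - 1)))
          = (∑' k : ℕ, ‖coef f k‖ ^ 2) *
            (∑' k : ℕ, ‖coef (fun z => f z ^ N) k‖ ^ 2 / ((k : ℝ) + 1) ^ (N - 1)) :=
        (tsum_mul_tsum_eq_tsum_sum_antidiagonal_of_summable_norm hsa' hsu').symm
      -- the termwise bound
      have hmono : ∀ k : ℕ, ‖coef (fun z => f z ^ (N + 1)) k‖ ^ 2 / ((k : ℝ) + 1) ^ N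
          ≤ ∑ ij ∈ Finset.HasAntidiagonal.antidiagonal k,
            ‖coef f ij.1‖ ^ 2 *
              (‖coef (fun z => f z ^ N) ij.2‖ ^ 2 / ((ij.2 : ℝ) + 1) ^ (N - 1)) := by
        intro k
        have hk1 : (0 : ℝ) < (k : ℝ) + 1 := by positivity
        have h1 : ‖coef (fun z => f z ^ (N + 1)) k‖
            ≤ ∑ ij ∈ Finset.HasAntidiagonal.antidiagonal k, ‖coef f ij.1‖ * ‖coef (fun z => f z ^ N) ij.2‖ := by
          rw [hcoef k]
          exact (norm_sum_le _ _).trans (le_of_eq (Finset.sum_congr rfl fun ij _ => norm_mul _ _))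
        have h2 : ‖coef (fun z => f z ^ (N + 1)) k‖ ^ 2
            ≤ ((k : ℝ) + 1) * ∑ ij ∈ Finset.HasAntidiagonal.antidiagonal k,
                ‖coef f ij.1‖ ^ 2 * ‖coef (fun z => f z ^ N) ij.2‖ ^ 2 := by
          calc ‖coef (fun z => f z ^ (N + 1)) k‖ ^ 2
              ≤ (∑ ij ∈ Finset.HasAntidiagonal.antidiagonal k,
                  ‖coef f ij.1‖ * ‖coef (fun z => f z ^ N) ij.2‖) ^ 2 :=
                pow_le_pow_left₀ (norm_nonneg _) h1 2
            _ ≤ (Finset.HasAntidiagonal.antidiagonal k).card * ∑ ij ∈ Finset.HasAntidiagonal.antidiagonal k,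
                  (‖coef f ij.1‖ * ‖coef (fun z => f z ^ N) ij.2‖) ^ 2 :=
                sq_sum_le_card_mul_sum_sq
            _ = ((k : ℝ) + 1) * ∑ ij ∈ Finset.HasAntidiagonal.antidiagonal k,
                  ‖coef f ij.1‖ ^ 2 * ‖coef (fun z => f z ^ N) ij.2‖ ^ 2 := by
                rw [Finset.Nat.card_antidiagonal]
                push_cast
                rw [Finset.sum_congr rfl fun ij _ => mul_pow _ _ 2]
        have hpow : ((k : ℝ) + 1) ^ N = (((k : ℝ) + 1) ^ (N - 1)) * ((k : ℝ) + 1) := by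
          rw [← pow_succ, Nat.sub_add_cancel hN1]
        calc ‖coef (fun z => f z ^ (N + 1)) k‖ ^ 2 / ((k : ℝ) + 1) ^ N
            ≤ (((k : ℝ) + 1) * ∑ ij ∈ Finset.HasAntidiagonal.antidiagonal k,
                ‖coef f ij.1‖ ^ 2 * ‖coef (fun z => f z ^ N) ij.2‖ ^ 2) / ((k : ℝ) + 1) ^ N := by
              gcongr
          _ = (∑ ij ∈ Finset.HasAntidiagonal.antidiagonal k,
                ‖coef f ij.1‖ ^ 2 * ‖coef (fun z => f z ^ N) ij.2‖ ^ 2)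
                / ((k : ℝ) + 1) ^ (N - 1) := by
              rw [hpow, div_eq_div_iff (by positivity : (0:ℝ) < _).ne'
                (by positivity : (0:ℝ) < _).ne']
              ring
          _ ≤ ∑ ij ∈ Finset.HasAntidiagonal.antidiagonal k,
                ‖coef f ij.1‖ ^ 2 *
                  (‖coef (fun z => f z ^ N) ij.2‖ ^ 2 / ((ij.2 : ℝ) + 1) ^ (N - 1)) := by
              rw [Finset.sum_div]
              refine Finset.sum_le_sum fun ij hij => ?_
              rw [Finset.HasAntidiagonal.mem_antidiagonal] at hij
              have hj : (ij.2 : ℝ) + 1 ≤ (k : ℝ) + 1 := by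
                have h2 : ij.2 ≤ k := by omega
                have : (ij.2 : ℝ) ≤ (k : ℝ) := by exact_mod_cast h2
                linarith
              rw [mul_div_assoc]
              gcongr
      have hts : Summable (fun k : ℕ =>
          ‖coef (fun z => f z ^ (N + 1)) k‖ ^ 2 / ((k : ℝ) + 1) ^ N) :=
        Summable.of_nonneg_of_le (fun k => by positivity) hmono hvs
      refine ⟨hts, ?_⟩
      calc ∑' k : ℕ, ‖coef (fun z => f z ^ (N + 1)) k‖ ^ 2 / ((k : ℝ) + 1) ^ N
          ≤ ∑' n : ℕ, (∑ ij ∈ Finset.HasAntidiagonal.antidiagonal n,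
              ‖coef f ij.1‖ ^ 2 *
                (‖coef (fun z => f z ^ N) ij.2‖ ^ 2 / ((ij.2 : ℝ) + 1) ^ (N - 1))) :=
            Summable.tsum_le_tsum hmono hts hvs
        _ = (∑' k : ℕ, ‖coef f k‖ ^ 2) *
              (∑' k : ℕ, ‖coef (fun z => f z ^ N) k‖ ^ 2 / ((k : ℝ) + 1) ^ (N - 1)) := htsum_v
        _ ≤ (∑' k : ℕ, ‖coef f k‖ ^ 2) * (∑' k : ℕ, ‖coef f k‖ ^ 2) ^ N := by
            have hA : 0 ≤ ∑' k : ℕ, ‖coef f k‖ ^ 2 := tsum_nonneg fun k => by positivity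
            exact mul_le_mul_of_nonneg_left hLe hA
        _ = (∑' k : ℕ, ‖coef f k‖ ^ 2) ^ (N + 1) := by rw [pow_succ]; ring

end AuxLemmas

/-- Composition (power) inequality for `l²_a(α)`: for `φ(z) = z^{2α-1}` with
`2α-1` a positive integer and every `f ∈ H²`,
`‖φ ∘ f‖²_{l²_a(α)} ≤ φ(‖f‖²_{H²})`, i.e. `‖f^{2α-1}‖² ≤ (‖f‖²_{H²})^{2α-1}`. -/
theorem l2a_composition_inequality (α : ℝ) (hα : 1 ≤ α) (N : ℕ) (hN : 2 * α - 1 = (N : ℝ))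
    (f : ℂ → ℂ) (hf : MemH2 f) :
    Meml2a α (fun z => f z ^ N) ∧
      l2aNorm α (fun z => f z ^ N) ^ 2 ≤ (H2norm f ^ 2) ^ N := by
  have hN1 : 1 ≤ N := by
    have h1 : (1 : ℝ) ≤ (N : ℝ) := by linarith
    exact_mod_cast h1
  have hw : ∀ k : ℕ, ((k : ℝ) + 1) ^ (2 * (α - 1)) = ((k : ℝ) + 1) ^ ((N - 1 : ℕ) : ℕ) := by
    intro k
    have hcast : ((N - 1 : ℕ) : ℝ) = (N : ℝ) - 1 := by
      rw [Nat.cast_sub hN1]; norm_num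
    have h2 : 2 * (α - 1) = ((N - 1 : ℕ) : ℝ) := by rw [hcast]; linarith
    rw [h2, Real.rpow_natCast]
  have hfun : (fun k : ℕ => ‖coef (fun z => f z ^ N) k‖ ^ 2 / ((k : ℝ) + 1) ^ (2 * (α - 1)))
      = fun k : ℕ => ‖coef (fun z => f z ^ N) k‖ ^ 2 / ((k : ℝ) + 1) ^ ((N - 1 : ℕ) : ℕ) := by
    funext k; rw [hw k]
  obtain ⟨hs, hle⟩ := aux_key hf N hN1
  constructor
  · refine ⟨hf.1.pow N, ?_⟩
    rw [hfun]
    exact hs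
  · have hnn : 0 ≤ ∑' k : ℕ, ‖coef (fun z => f z ^ N) k‖ ^ 2 / ((k : ℝ) + 1) ^ (2 * (α - 1)) :=
      tsum_nonneg fun k => by positivity
    have hA : H2norm f ^ 2 = ∑' k : ℕ, ‖coef f k‖ ^ 2 := by
      rw [H2norm, Real.sq_sqrt (tsum_nonneg fun k => by positivity)]
    rw [l2aNorm, Real.sq_sqrt hnn, hA, hfun]
    exact hle
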